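/- arXiv:0905.3863 — 4 statements merged into one kernel-verified Lean document; each statement's English description precedes it below -/
import Mathlib

section
/- Let y > 0 and δ > 0, and define the Poisson kernel P(t,y) = (1/π) · y/(y² + t²). Define P₁(t,y) = min(P(t,y), P(δ,y)). Then for all t ∈ ℝ, P₁(t,y) = ∫_δ^∞ (1/(2a)) · χ_{[-a,a]}(t) · φ_y(a) da, where φ_y(a) = -2a · (d/da) P₁(a,y). -/
open MeasureTheory Set

theorem stmt0 (y δ : ℝ) (hy : 0 < y) (hδ : 0 < δ)
    (P : ℝ → ℝ) (hP : ∀ t, P t = y / (Real.pi * (y ^ 2 + t ^ 2)))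
    (P₁ : ℝ → ℝ) (hP₁ : ∀ t, P₁ t = min (P t) (P δ))
    (φ : ℝ → ℝ) (hφ : ∀ a, φ a = -2 * a * deriv P₁ a) :
    ∀ t : ℝ,
      P₁ t = ∫ a in Set.Ioi δ,
        (1 / (2 * a)) * Set.indicator (Set.Icc (-a) a) (fun _ => (1 : ℝ)) t * φ a := by
  have hpi := Real.pi_pos
  set D : ℝ → ℝ := fun x => 2 * x * y / (Real.pi * (y ^ 2 + x ^ 2) ^ 2) with hD
  have hden : ∀ x : ℝ, Real.pi * (y ^ 2 + x ^ 2) ≠ 0 := fun x => by positivity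
  -- derivative of P
  have hPd : ∀ x : ℝ, HasDerivAt P (-(D x)) x := by
    intro x
    have h1 : HasDerivAt (fun u : ℝ => Real.pi * (y ^ 2 + u ^ 2)) (Real.pi * (2 * x)) x := by
      have h0 : HasDerivAt (fun u : ℝ => y ^ 2 + u ^ 2) (2 * x) x := by
        simpa using (hasDerivAt_pow 2 x).const_add (y ^ 2)
      simpa using h0.const_mul Real.pi
    have h2 := (h1.inv (hden x)).const_mul y
    have hfe : (fun u : ℝ => y * (Real.pi * (y ^ 2 + u ^ 2))⁻¹) = P := by
      funext u; rw [hP]; field_simp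
    simp only [Pi.inv_apply] at h2
    rw [hfe] at h2
    refine h2.congr_deriv ?_
    rw [hD]
    field_simp
  -- monotonicity
  have hmono : ∀ u v : ℝ, u ^ 2 ≤ v ^ 2 → P v ≤ P u := by
    intro u v huv
    rw [hP, hP]
    apply div_le_div_of_nonneg_left hy.le (by positivity)
    nlinarith
  -- the key integral computation
  have hkey : ∀ m : ℝ, 0 < m → ∫ a in Set.Ioi m, D a = P m := by
    intro m hm
    have htend : Filter.Tendsto (fun a : ℝ => -P a) Filter.atTop (nhds 0) := by
      have h1 : Filter.Tendsto (fun a : ℝ => Real.pi * (y ^ 2 + a ^ 2)) Filter.atTop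
          Filter.atTop := by
        apply Filter.Tendsto.const_mul_atTop hpi
        apply Filter.tendsto_atTop_add_const_left
        exact Filter.tendsto_pow_atTop two_ne_zero
      have h2 : Filter.Tendsto P Filter.atTop (nhds 0) := by
        have := Filter.Tendsto.div_atTop (tendsto_const_nhds (x := y)) h1
        apply this.congr
        intro a; rw [hP]
      simpa using h2.neg
    have hderiv : ∀ x ∈ Set.Ici m, HasDerivAt (fun a => -P a) (D x) x := by
      intro x _
      have h3 := (hPd x).neg; rw [neg_neg] at h3; exact h3
    have hpos : ∀ x ∈ Set.Ioi m, 0 ≤ D x := by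
      intro x hx
      have hx0 : 0 < x := hm.trans hx
      rw [hD]; positivity
    have := integral_Ioi_of_hasDerivAt_of_nonneg' hderiv hpos htend
    simpa using this
  -- derivative of P₁ above δ
  have hP₁d : ∀ a ∈ Set.Ioi δ, deriv P₁ a = -(D a) := by
    intro a ha
    have hEq : P₁ =ᶠ[nhds a] P := by
      filter_upwards [Ioi_mem_nhds ha] with x hx
      rw [hP₁]
      exact min_eq_left (hmono δ x (by nlinarith [hx.out]))
    rw [hEq.deriv_eq]
    exact (hPd a).deriv
  intro t
  have habs : P t = P |t| := by rw [hP, hP, sq_abs]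
  have hcongr : ∀ a ∈ Set.Ioi δ,
      (1 / (2 * a)) * Set.indicator (Set.Icc (-a) a) (fun _ => (1 : ℝ)) t * φ a
        = Set.indicator (Set.Ici |t|) D a := by
    intro a ha
    have ha0 : (0 : ℝ) < a := hδ.trans ha
    rw [hφ, hP₁d a ha]
    by_cases h : |t| ≤ a
    · rw [Set.indicator_of_mem (Set.mem_Icc.mpr (abs_le.mp h)),
        Set.indicator_of_mem (Set.mem_Ici.mpr h)]
      field_simp
    · rw [Set.indicator_of_notMem (fun hc => h (abs_le.mpr (Set.mem_Icc.mp hc))),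
        Set.indicator_of_notMem (fun hc => h (Set.mem_Ici.mp hc))]
      ring
  rw [setIntegral_congr_fun measurableSet_Ioi hcongr, setIntegral_indicator measurableSet_Ici]
  by_cases ht : |t| ≤ δ
  · have hset : Set.Ioi δ ∩ Set.Ici |t| = Set.Ioi δ := by
      apply Set.inter_eq_left.mpr
      intro a ha
      exact le_trans ht (le_of_lt ha)
    rw [hset, hkey δ hδ, hP₁]
    refine min_eq_right (hmono t δ ?_)
    nlinarith [sq_abs t, abs_nonneg t]
  · push_neg at ht
    have hset : Set.Ioi δ ∩ Set.Ici |t| = Set.Ici |t| := by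
      apply Set.inter_eq_right.mpr
      intro a ha
      exact lt_of_lt_of_le ht ha
    rw [hset, integral_Ici_eq_integral_Ioi, hkey |t| (hδ.trans ht), hP₁, ← habs]
    refine min_eq_left (hmono δ t ?_)
    nlinarith [sq_abs t]
end

section
/- Let f ∈ L¹(ℝ), f ≥ 0, and λ > 0. For R > 0 and θ ∈ (0, π/2], write x = R cos θ, y = R sin θ, δ = R − x, and define P₂(t,y) = (y/π)(1/(y²+t²) − 1/(y²+δ²)) for |t| < δ and 0 otherwise. If ∫_ℝ P₂(x − t, y) f(t) dt > λ, then R < ‖f‖₁ / (2πλ). -/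
open MeasureTheory

theorem stmt6 (f : ℝ → ℝ) (hf : Integrable f) (hf0 : ∀ t, 0 ≤ f t)
    (lam : ℝ) (hlam : 0 < lam)
    (R θ : ℝ) (hR : 0 < R) (hθ₁ : 0 < θ) (hθ₂ : θ ≤ Real.pi / 2)
    (x y δ : ℝ) (hx : x = R * Real.cos θ) (hy : y = R * Real.sin θ) (hδ : δ = R - x)
    (P₂ : ℝ → ℝ)
    (hP₂ : ∀ t, P₂ t =
      if |t| < δ then (y / Real.pi) * (1 / (y ^ 2 + t ^ 2) - 1 / (y ^ 2 + δ ^ 2)) else 0)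
    (h : lam < ∫ t, P₂ (x - t) * f t) :
    R < (∫ t, f t) / (2 * Real.pi * lam) := by
  have hπ : 0 < Real.pi := Real.pi_pos
  have hθπ : θ < Real.pi := lt_of_le_of_lt hθ₂ (by linarith)
  have hsin : 0 < Real.sin θ := Real.sin_pos_of_pos_of_lt_pi hθ₁ hθπ
  have hcos : 0 ≤ Real.cos θ := Real.cos_nonneg_of_mem_Icc ⟨by linarith, hθ₂⟩
  have hcos1 : Real.cos θ < 1 := by
    nlinarith [Real.sin_sq_add_cos_sq θ]
  have hy0 : 0 < y := by rw [hy]; positivity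
  have hδ0 : 0 < δ := by rw [hδ, hx]; nlinarith
  have hsin1 : Real.sin θ ≤ 1 := Real.sin_le_one θ
  have hcos1' : Real.cos θ ≤ 1 := le_of_lt hcos1
  have hδy : δ ≤ y := by
    rw [hδ, hx, hy]
    have hpyth := Real.sin_sq_add_cos_sq θ
    nlinarith [mul_nonneg hsin.le (sub_nonneg.2 hsin1), mul_nonneg hcos (sub_nonneg.2 hcos1')]
  have hsum : y ^ 2 + δ ^ 2 = 2 * R * δ := by
    have hpyth := Real.sin_sq_add_cos_sq θ
    rw [hy, hδ, hx]; nlinarith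
  have hsd : 0 < y ^ 2 + δ ^ 2 := by positivity
  have key : ∀ t, P₂ t ≤ 1 / (2 * Real.pi * R) := by
    intro t
    rw [hP₂]
    split_ifs with ht
    · have hs : 0 < y ^ 2 + t ^ 2 := by positivity
      have h1 : (y / Real.pi) * (1 / (y ^ 2 + t ^ 2) - 1 / (y ^ 2 + δ ^ 2)) ≤
          (y / Real.pi) * (δ ^ 2 / (y ^ 2 * (y ^ 2 + δ ^ 2))) := by
        apply mul_le_mul_of_nonneg_left _ (by positivity)
        rw [div_sub_div _ _ (ne_of_gt hs) (ne_of_gt hsd),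
          div_le_div_iff₀ (by positivity) (by positivity)]
        nlinarith [mul_nonneg (sq_nonneg t) (sq_nonneg (y ^ 2 + δ ^ 2))]
      refine h1.trans ?_
      rw [hsum, div_mul_div_comm,
        div_le_div_iff₀ (by positivity) (by positivity)]
      nlinarith [mul_pos (mul_pos hπ hR) (mul_pos hδ0 (mul_pos hy0 hy0))]
    · positivity
  have hP2nonneg : ∀ t, 0 ≤ P₂ t := by
    intro t
    rw [hP₂]
    split_ifs with ht
    · have hs : 0 < y ^ 2 + t ^ 2 := by positivity
      have ht2 : t ^ 2 ≤ δ ^ 2 := by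
        have := abs_nonneg t
        nlinarith [sq_abs t]
      have : 1 / (y ^ 2 + δ ^ 2) ≤ 1 / (y ^ 2 + t ^ 2) :=
        one_div_le_one_div_of_le hs (by linarith)
      have : 0 ≤ 1 / (y ^ 2 + t ^ 2) - 1 / (y ^ 2 + δ ^ 2) := by linarith
      positivity
    · exact le_refl 0
  have hmono : ∫ t, P₂ (x - t) * f t ≤ ∫ t, f t / (2 * Real.pi * R) := by
    apply integral_mono_of_nonneg
    · filter_upwards with t
      exact mul_nonneg (hP2nonneg _) (hf0 t)
    · exact hf.div_const _
    · filter_upwards with t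
      rw [div_eq_mul_one_div (f t)]
      calc P₂ (x - t) * f t ≤ (1 / (2 * Real.pi * R)) * f t :=
            mul_le_mul_of_nonneg_right (key _) (hf0 t)
        _ = f t * (1 / (2 * Real.pi * R)) := mul_comm _ _
  have hlt : lam < (∫ t, f t) / (2 * Real.pi * R) := by
    calc lam < ∫ t, P₂ (x - t) * f t := h
      _ ≤ ∫ t, f t / (2 * Real.pi * R) := hmono
      _ = (∫ t, f t) / (2 * Real.pi * R) := integral_div _ _
  rw [lt_div_iff₀ (by positivity)] at hlt ⊢
  nlinarith
end

section
/- There exists a constant K₁ > 0 such that for every f ∈ L¹(ℝ) and every λ > 0, the Lebesgue measure of the set {ρ > 0 : sup_{0 < θ < π} |(1/π) ∫_ℝ (ρ sin θ / ((t − ρ cos θ)² + (ρ sin θ)²)) f(t) dt| > λ} is at most K₁ ‖f‖₁ / λ. -/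
open MeasureTheory Metric Set ENNReal

namespace Stmt9Aux

/-- Kernel comparison: if the horizontal displacement is at most `y`, the Poisson kernel
at `x` is dominated by 3 times the Poisson kernel at `x₀`. -/
lemma kernel_comp {x x₀ y t : ℝ} (hy : 0 < y) (h : (x - x₀) ^ 2 ≤ y ^ 2) :
    y / ((t - x) ^ 2 + y ^ 2) ≤ 3 * (y / ((t - x₀) ^ 2 + y ^ 2)) := by
  have hD : 0 < (t - x) ^ 2 + y ^ 2 := by positivity
  have hD0 : 0 < (t - x₀) ^ 2 + y ^ 2 := by positivity
  rw [mul_div_assoc'] 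
  rw [div_le_div_iff₀ hD hD0]
  nlinarith [sq_nonneg (t - x + (x - x₀)), sq_nonneg (t - x - (x - x₀)), hy.le, sq_nonneg y]

/-- Annuli bound: if all ball averages of `g` around `x₀` are at most `c`,
then the Poisson integral of `g` at height `y` over `x₀` is at most `10 c`. -/
lemma poisson_le (g : ℝ → ℝ≥0∞) (x₀ y c : ℝ) (hy : 0 < y) (hc : 0 ≤ c)
    (H : ∀ r, 0 < r → ∫⁻ t in ball x₀ r, g t ≤ ENNReal.ofReal (c * (2 * r))) :
    ∫⁻ t, ENNReal.ofReal (y / ((t - x₀) ^ 2 + y ^ 2)) * g t ≤ ENNReal.ofReal (10 * c) := by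
  classical
  set F : ℝ → ℝ≥0∞ := fun t => ENNReal.ofReal (y / ((t - x₀) ^ 2 + y ^ 2)) * g t with hF
  set B : Set ℝ := ball x₀ y with hBdef
  set A : ℕ → Set ℝ := fun k => ball x₀ (2 ^ (k + 1) * y) \ ball x₀ (2 ^ k * y) with hA
  have hcover : (Set.univ : Set ℝ) ⊆ B ∪ ⋃ k, A k := by
    intro t _
    by_cases ht : t ∈ B
    · exact Or.inl ht
    · right
      have hd : y ≤ |t - x₀| := by
        simp only [hBdef, mem_ball, Real.dist_eq, not_lt] at ht
        exact ht
      have hex : ∃ n : ℕ, |t - x₀| < 2 ^ n * y := by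
        obtain ⟨n, hn⟩ := pow_unbounded_of_one_lt (|t - x₀| / y) one_lt_two
        exact ⟨n, (div_lt_iff₀ hy).1 hn⟩
      have hn₀ : |t - x₀| < 2 ^ Nat.find hex * y := Nat.find_spec hex
      have hne : Nat.find hex ≠ 0 := by
        intro h
        rw [h] at hn₀
        simp only [pow_zero, one_mul] at hn₀
        linarith
      obtain ⟨k, hk⟩ := Nat.exists_eq_succ_of_ne_zero hne
      have hmin : ¬ (|t - x₀| < 2 ^ k * y) := Nat.find_min hex (by omega)
      refine mem_iUnion.2 ⟨k, ?_, ?_⟩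
      · simp only [mem_ball, Real.dist_eq]
        rw [← Nat.succ_eq_add_one, ← hk]
        exact hn₀
      · simp only [mem_ball, Real.dist_eq]
        exact hmin
  have hBbound : ∫⁻ t in B, F t ≤ ENNReal.ofReal (2 * c) := by
    have hpt : ∀ t, F t ≤ ENNReal.ofReal (1 / y) * g t := by
      intro t
      refine mul_le_mul_left (ENNReal.ofReal_le_ofReal ?_) _
      rw [div_le_div_iff₀ (by positivity) hy]
      nlinarith [sq_nonneg (t - x₀)]
    calc ∫⁻ t in B, F t ≤ ∫⁻ t in B, ENNReal.ofReal (1 / y) * g t := lintegral_mono hpt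
      _ = ENNReal.ofReal (1 / y) * ∫⁻ t in B, g t :=
          lintegral_const_mul' _ _ ENNReal.ofReal_ne_top
      _ ≤ ENNReal.ofReal (1 / y) * ENNReal.ofReal (c * (2 * y)) :=
          mul_le_mul_right (H y hy) _
      _ = ENNReal.ofReal (2 * c) := by
          rw [← ENNReal.ofReal_mul (by positivity)]
          congr 1
          field_simp
  have hAbound : ∀ k : ℕ, ∫⁻ t in A k, F t ≤ ENNReal.ofReal (4 * c * (1 / 2 ^ k)) := by
    intro k
    have h2k : (0:ℝ) < 2 ^ k * y := by positivity
    have hmeas : MeasurableSet (A k) := measurableSet_ball.diff measurableSet_ball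
    have hpt : ∀ t ∈ A k, F t ≤ ENNReal.ofReal (y / (2 ^ k * y) ^ 2) * g t := by
      intro t htk
      refine mul_le_mul_left (ENNReal.ofReal_le_ofReal ?_) _
      have hge : 2 ^ k * y ≤ |t - x₀| := by
        have := htk.2
        simp only [mem_ball, Real.dist_eq, not_lt] at this
        exact this
      have hsq : (2 ^ k * y) ^ 2 ≤ (t - x₀) ^ 2 := by
        rw [← sq_abs (t - x₀)]
        exact pow_le_pow_left₀ h2k.le hge 2
      rw [div_le_div_iff₀ (by positivity) (by positivity)]
      nlinarith [sq_nonneg y, hy.le]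
    calc ∫⁻ t in A k, F t ≤ ∫⁻ t in A k, ENNReal.ofReal (y / (2 ^ k * y) ^ 2) * g t :=
          setLIntegral_mono' hmeas hpt
      _ = ENNReal.ofReal (y / (2 ^ k * y) ^ 2) * ∫⁻ t in A k, g t :=
          lintegral_const_mul' _ _ ENNReal.ofReal_ne_top
      _ ≤ ENNReal.ofReal (y / (2 ^ k * y) ^ 2) *
            ENNReal.ofReal (c * (2 * (2 ^ (k + 1) * y))) := by
          refine mul_le_mul_right ?_ _
          refine le_trans (lintegral_mono_set diff_subset) (H _ (by positivity))
      _ = ENNReal.ofReal (4 * c * (1 / 2 ^ k)) := by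
          rw [← ENNReal.ofReal_mul (by positivity)]
          congr 1
          have h2 : (2:ℝ) ^ k ≠ 0 := by positivity
          rw [pow_succ]
          field_simp
          ring
  have hsum : ∑' k : ℕ, ENNReal.ofReal (4 * c * (1 / 2 ^ k)) = ENNReal.ofReal (8 * c) := by
    have heq : ∀ k : ℕ, 4 * c * (1 / 2 ^ k) = (8 * c) / 2 / 2 ^ k := fun k => by ring
    simp_rw [heq]
    rw [← ENNReal.ofReal_tsum_of_nonneg (fun k => by positivity)
      (summable_geometric_two' (8 * c)), tsum_geometric_two']
  calc ∫⁻ t, F t = ∫⁻ t in Set.univ, F t := (setLIntegral_univ F).symm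
    _ ≤ ∫⁻ t in B ∪ ⋃ k, A k, F t := lintegral_mono_set hcover
    _ ≤ (∫⁻ t in B, F t) + ∫⁻ t in ⋃ k, A k, F t := lintegral_union_le _ _ _
    _ ≤ (∫⁻ t in B, F t) + ∑' k, ∫⁻ t in A k, F t :=
        add_le_add_right (lintegral_iUnion_le _ _) _
    _ ≤ ENNReal.ofReal (2 * c) + ∑' k : ℕ, ENNReal.ofReal (4 * c * (1 / 2 ^ k)) :=
        add_le_add hBbound (ENNReal.tsum_le_tsum hAbound)
    _ = ENNReal.ofReal (2 * c) + ENNReal.ofReal (8 * c) := by rw [hsum]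
    _ = ENNReal.ofReal (10 * c) := by
        rw [← ENNReal.ofReal_add (by positivity) (by positivity)]
        ring_nf

/-- Vitali-covering weak type bound for the maximal averages. -/
lemma weak_max (g : ℝ → ℝ≥0∞) (c : ℝ) (hc : 0 < c) :
    volume {x : ℝ | ∃ r, 0 < r ∧
        ENNReal.ofReal (c * (2 * r)) < ∫⁻ t in ball x r, g t} * ENNReal.ofReal c
      ≤ 5 * ∫⁻ t, g t := by
  classical
  by_cases hI : ∫⁻ t, g t = ⊤
  · rw [hI]
    simp
  set E := {x : ℝ | ∃ r, 0 < r ∧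
      ENNReal.ofReal (c * (2 * r)) < ∫⁻ t in ball x r, g t} with hE
  set I : ℝ≥0∞ := ∫⁻ t, g t with hIdef
  have hch : ∀ x ∈ E, ∃ r, 0 < r ∧
      ENNReal.ofReal (c * (2 * r)) < ∫⁻ t in ball x r, g t := fun x hx => hx
  choose! r hr1 hr2 using hch
  have hrR : ∀ x ∈ E, r x ≤ I.toReal / (2 * c) := by
    intro x hx
    have h1 : ENNReal.ofReal (c * (2 * r x)) ≤ I :=
      le_trans (hr2 x hx).le (setLIntegral_le_lintegral _ _)
    have h2 : c * (2 * r x) ≤ I.toReal := (ENNReal.ofReal_le_iff_le_toReal hI).1 h1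
    rw [le_div_iff₀ (by positivity)]
    linarith
  obtain ⟨u, huE, hdisj, hcov⟩ :=
    Vitali.exists_disjoint_subfamily_covering_enlargement_closedBall E (fun x => x) r
      (I.toReal / (2 * c)) hrR 4 (by norm_num)
  have hcount : u.Countable := by
    apply hdisj.countable_of_nonempty_interior
    intro b hb
    rw [interior_closedBall _ (hr1 b (huE hb)).ne']
    exact ⟨b, mem_ball_self (hr1 b (huE hb))⟩
  have hEsub : E ⊆ ⋃ b ∈ u, closedBall b (4 * r b) := by
    intro x hx
    obtain ⟨b, hb, hsub⟩ := hcov x hx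
    exact mem_biUnion hb (hsub (mem_closedBall_self (hr1 x hx).le))
  have hμE : volume E ≤ ∑' b : u, volume (closedBall (b : ℝ) (4 * r b)) :=
    le_trans (measure_mono hEsub) (measure_biUnion_le _ hcount _)
  have key : ∀ b : u, volume (closedBall (b : ℝ) (4 * r b)) * ENNReal.ofReal c
      ≤ 4 * ∫⁻ t in ball (b : ℝ) (r b), g t := by
    intro b
    have hrb : 0 < r b := hr1 b (huE b.2)
    rw [Real.volume_closedBall, ← ENNReal.ofReal_mul (by nlinarith)]
    have heq : (2 * (4 * r b)) * c = 4 * (c * (2 * r b)) := by ring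
    rw [heq, ENNReal.ofReal_mul (by norm_num)]
    have h4 : ENNReal.ofReal (4 : ℝ) = 4 := by
      rw [ENNReal.ofReal_ofNat]
    rw [h4]
    exact mul_le_mul_right (hr2 b (huE b.2)).le _
  have hpair : Pairwise (Function.onFun Disjoint fun b : u => ball (b : ℝ) (r b)) := by
    intro b b' hne
    have hd := hdisj b.2 b'.2 (fun h => hne (Subtype.ext h))
    exact hd.mono ball_subset_closedBall ball_subset_closedBall
  haveI := hcount.to_subtype
  calc volume E * ENNReal.ofReal c
      ≤ (∑' b : u, volume (closedBall (b : ℝ) (4 * r b))) * ENNReal.ofReal c :=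
        mul_le_mul_left hμE _
    _ = ∑' b : u, volume (closedBall (b : ℝ) (4 * r b)) * ENNReal.ofReal c :=
        ENNReal.tsum_mul_right.symm
    _ ≤ ∑' b : u, 4 * ∫⁻ t in ball (b : ℝ) (r b), g t := ENNReal.tsum_le_tsum key
    _ = 4 * ∑' b : u, ∫⁻ t in ball (b : ℝ) (r b), g t := ENNReal.tsum_mul_left
    _ = 4 * ∫⁻ t in ⋃ b : u, ball (b : ℝ) (r b), g t := by
        rw [lintegral_iUnion (fun b => measurableSet_ball) hpair]
    _ ≤ 4 * I := mul_le_mul_right (setLIntegral_le_lintegral _ _) _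
    _ ≤ 5 * I := mul_le_mul_left (by norm_num) _


/-- If the Poisson integral of `|f|` is large, some ball average around `x₀` is large. -/
lemma ball_of_poisson (f : ℝ → ℝ) (c x x₀ y : ℝ) (hy : 0 < y) (hc : 0 < c)
    (hdist : (x - x₀) ^ 2 ≤ y ^ 2)
    (hbig : ENNReal.ofReal (30 * c) <
      ∫⁻ t, ENNReal.ofReal (y / ((t - x) ^ 2 + y ^ 2)) * ENNReal.ofReal |f t|) :
    ∃ r, 0 < r ∧ ENNReal.ofReal (c * (2 * r)) <
      ∫⁻ t in ball x₀ r, ENNReal.ofReal |f t| := by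
  by_contra hcon
  push_neg at hcon
  have hple := poisson_le (fun t => ENNReal.ofReal |f t|) x₀ y c hy hc.le hcon
  have hcmp : (∫⁻ t, ENNReal.ofReal (y / ((t - x) ^ 2 + y ^ 2)) * ENNReal.ofReal |f t|)
      ≤ 3 * ∫⁻ t, ENNReal.ofReal (y / ((t - x₀) ^ 2 + y ^ 2)) * ENNReal.ofReal |f t| := by
    rw [← lintegral_const_mul' (3 : ℝ≥0∞) _ (by norm_num)]
    refine lintegral_mono fun t => ?_
    rw [← mul_assoc]
    refine mul_le_mul_left ?_ _
    calc ENNReal.ofReal (y / ((t - x) ^ 2 + y ^ 2))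
        ≤ ENNReal.ofReal (3 * (y / ((t - x₀) ^ 2 + y ^ 2))) :=
          ENNReal.ofReal_le_ofReal (kernel_comp hy hdist)
      _ = 3 * ENNReal.ofReal (y / ((t - x₀) ^ 2 + y ^ 2)) := by
          rw [ENNReal.ofReal_mul (by norm_num), ENNReal.ofReal_ofNat]
  have hfin : (3 : ℝ≥0∞) * ENNReal.ofReal (10 * c) = ENNReal.ofReal (30 * c) := by
    rw [← ENNReal.ofReal_ofNat 3, ← ENNReal.ofReal_mul (by norm_num)]
    congr 1
    ring
  have : ENNReal.ofReal (30 * c) < ENNReal.ofReal (30 * c) :=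
    hbig.trans_le (hcmp.trans (by rw [← hfin]; exact mul_le_mul_right hple _))
  exact absurd this (lt_irrefl _)

/-- Convert a large Bochner Poisson integral into a large lower Lebesgue integral. -/
lemma lint_big (f : ℝ → ℝ) (hf : Integrable f) (x y a : ℝ) (hy : 0 < y) (ha : 0 ≤ a)
    (h : a < |∫ t, (y / ((t - x) ^ 2 + y ^ 2)) * f t|) :
    ENNReal.ofReal a <
      ∫⁻ t, ENNReal.ofReal (y / ((t - x) ^ 2 + y ^ 2)) * ENNReal.ofReal |f t| := by
  have hD : ∀ t : ℝ, 0 < (t - x) ^ 2 + y ^ 2 := fun t => by positivity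
  have hKcont : Continuous fun t : ℝ => y / ((t - x) ^ 2 + y ^ 2) :=
    continuous_const.div (by continuity) fun t => (hD t).ne'
  have hKbdd : ∀ t : ℝ, ‖y / ((t - x) ^ 2 + y ^ 2)‖ ≤ 1 / y := by
    intro t
    rw [Real.norm_eq_abs, abs_of_nonneg (by positivity)]
    rw [div_le_div_iff₀ (hD t) hy]
    nlinarith [sq_nonneg (t - x)]
  have hint : Integrable (fun t => (y / ((t - x) ^ 2 + y ^ 2)) * f t) :=
    hf.bdd_mul (c := 1 / y) hKcont.aestronglyMeasurable (Filter.Eventually.of_forall hKbdd)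
  have h2 : |∫ t, (y / ((t - x) ^ 2 + y ^ 2)) * f t|
      ≤ ∫ t, |(y / ((t - x) ^ 2 + y ^ 2)) * f t| := by
    simpa only [Real.norm_eq_abs] using
      norm_integral_le_integral_norm (fun t => (y / ((t - x) ^ 2 + y ^ 2)) * f t)
  have h3 : a < ∫ t, |(y / ((t - x) ^ 2 + y ^ 2)) * f t| := h.trans_le h2
  have h4 : ENNReal.ofReal (∫ t, |(y / ((t - x) ^ 2 + y ^ 2)) * f t|)
      = ∫⁻ t, ENNReal.ofReal |(y / ((t - x) ^ 2 + y ^ 2)) * f t| :=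
    ofReal_integral_eq_lintegral_ofReal hint.abs
      (Filter.Eventually.of_forall fun t => abs_nonneg _)
  have h5 : ∀ t : ℝ, ENNReal.ofReal |(y / ((t - x) ^ 2 + y ^ 2)) * f t|
      = ENNReal.ofReal (y / ((t - x) ^ 2 + y ^ 2)) * ENNReal.ofReal |f t| := by
    intro t
    rw [abs_mul, abs_of_nonneg (by positivity : (0:ℝ) ≤ y / ((t - x) ^ 2 + y ^ 2)),
      ENNReal.ofReal_mul (by positivity)]
  calc ENNReal.ofReal a
      < ENNReal.ofReal (∫ t, |(y / ((t - x) ^ 2 + y ^ 2)) * f t|) := by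
        exact (ENNReal.ofReal_lt_ofReal_iff_of_nonneg ha).2 h3
    _ = ∫⁻ t, ENNReal.ofReal |(y / ((t - x) ^ 2 + y ^ 2)) * f t| := h4
    _ = ∫⁻ t, ENNReal.ofReal (y / ((t - x) ^ 2 + y ^ 2)) * ENNReal.ofReal |f t| :=
        lintegral_congr fun t => h5 t

end Stmt9Aux


open Stmt9Aux

theorem stmt9 :
    ∃ K : ℝ, 0 < K ∧ ∀ f : ℝ → ℝ, Integrable f → ∀ lam : ℝ, 0 < lam →
      volume {ρ : ℝ | 0 < ρ ∧ ∃ θ ∈ Set.Ioo (0 : ℝ) Real.pi,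
          lam < |(1 / Real.pi) * ∫ t,
            (ρ * Real.sin θ / ((t - ρ * Real.cos θ) ^ 2 + (ρ * Real.sin θ) ^ 2)) * f t|}
        ≤ ENNReal.ofReal (K * (∫ t, |f t|) / lam) := by
  refine ⟨100, by norm_num, ?_⟩
  intro f hf lam hlam
  classical
  have hπ : 0 < Real.pi := Real.pi_pos
  set c : ℝ := lam * Real.pi / 30 with hcdef
  have hcpos : 0 < c := by positivity
  set g : ℝ → ℝ≥0∞ := fun t => ENNReal.ofReal |f t| with hg
  have hJ0 : 0 ≤ ∫ t, |f t| := integral_nonneg fun t => abs_nonneg _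
  have hIg : ∫⁻ t, g t = ENNReal.ofReal (∫ t, |f t|) :=
    (ofReal_integral_eq_lintegral_ofReal hf.abs
      (Filter.Eventually.of_forall fun t => abs_nonneg _)).symm
  set E := {x : ℝ | ∃ r, 0 < r ∧
      ENNReal.ofReal (c * (2 * r)) < ∫⁻ t in ball x r, g t} with hE
  have hsub : {ρ : ℝ | 0 < ρ ∧ ∃ θ ∈ Set.Ioo (0 : ℝ) Real.pi,
      lam < |(1 / Real.pi) * ∫ t,
        (ρ * Real.sin θ / ((t - ρ * Real.cos θ) ^ 2 + (ρ * Real.sin θ) ^ 2)) * f t|}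
      ⊆ E ∪ (-E) := by
    rintro ρ ⟨hρ, θ, hθ, hlt⟩
    have hsin : 0 < Real.sin θ := Real.sin_pos_of_pos_of_lt_pi hθ.1 hθ.2
    have hypos : 0 < ρ * Real.sin θ := mul_pos hρ hsin
    -- turn hlt into a bound without the 1/π factor
    have hlt2 : lam * Real.pi <
        |∫ t, (ρ * Real.sin θ / ((t - ρ * Real.cos θ) ^ 2 + (ρ * Real.sin θ) ^ 2)) * f t| := by
      rw [abs_mul, abs_of_pos (by positivity : (0:ℝ) < 1 / Real.pi), one_div,
        inv_mul_eq_div, lt_div_iff₀ hπ] at hlt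
      linarith [hlt]
    have hbig := lint_big f hf (ρ * Real.cos θ) (ρ * Real.sin θ) (lam * Real.pi) hypos
      (by positivity) hlt2
    have h30 : (30 : ℝ) * c = lam * Real.pi := by rw [hcdef]; field_simp
    rw [← h30] at hbig
    obtain ⟨x₀, hx₀, hdist⟩ : ∃ x₀, (x₀ = ρ ∨ x₀ = -ρ) ∧
        (ρ * Real.cos θ - x₀) ^ 2 ≤ (ρ * Real.sin θ) ^ 2 := by
      have hpyth := Real.sin_sq_add_cos_sq θ
      rcases le_or_gt 0 (Real.cos θ) with hcos | hcos
      · refine ⟨ρ, Or.inl rfl, ?_⟩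
        have h1 : 0 ≤ ρ ^ 2 * Real.cos θ * (1 - Real.cos θ) :=
          mul_nonneg (mul_nonneg (sq_nonneg ρ) hcos)
            (sub_nonneg.2 (Real.cos_le_one θ))
        nlinarith [sq_nonneg ρ]
      · refine ⟨-ρ, Or.inr rfl, ?_⟩
        have h1 : 0 ≤ ρ ^ 2 * (-Real.cos θ) * (Real.cos θ + 1) :=
          mul_nonneg (mul_nonneg (sq_nonneg ρ) (neg_nonneg.2 hcos.le))
            (by linarith [Real.neg_one_le_cos θ])
        nlinarith [sq_nonneg ρ]
    have hx₀E : x₀ ∈ E :=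
      ball_of_poisson f c (ρ * Real.cos θ) x₀ (ρ * Real.sin θ) hypos hcpos hdist hbig
    rcases hx₀ with h | h
    · exact Or.inl (h ▸ hx₀E)
    · refine Or.inr ?_
      rw [Set.mem_neg]
      rw [h] at hx₀E
      exact hx₀E
  have hμ2 : volume (E ∪ (-E)) ≤ 2 * volume E := by
    refine le_trans (measure_union_le _ _) ?_
    rw [Measure.measure_neg, two_mul]
  have hwk := weak_max g c hcpos
  have hlamle : ENNReal.ofReal lam ≤ 10 * ENNReal.ofReal c := by
    rw [← ENNReal.ofReal_ofNat 10, ← ENNReal.ofReal_mul (by norm_num)]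
    refine ENNReal.ofReal_le_ofReal ?_
    rw [hcdef]
    nlinarith [Real.pi_gt_three]
  have hmain : volume {ρ : ℝ | 0 < ρ ∧ ∃ θ ∈ Set.Ioo (0 : ℝ) Real.pi,
      lam < |(1 / Real.pi) * ∫ t,
        (ρ * Real.sin θ / ((t - ρ * Real.cos θ) ^ 2 + (ρ * Real.sin θ) ^ 2)) * f t|}
      * ENNReal.ofReal lam ≤ ENNReal.ofReal (100 * ∫ t, |f t|) := by
    calc volume {ρ : ℝ | 0 < ρ ∧ ∃ θ ∈ Set.Ioo (0 : ℝ) Real.pi,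
          lam < |(1 / Real.pi) * ∫ t,
            (ρ * Real.sin θ / ((t - ρ * Real.cos θ) ^ 2 + (ρ * Real.sin θ) ^ 2)) * f t|}
          * ENNReal.ofReal lam
        ≤ (2 * volume E) * (10 * ENNReal.ofReal c) :=
          mul_le_mul' (le_trans (measure_mono hsub) hμ2) hlamle
      _ = 20 * (volume E * ENNReal.ofReal c) := by ring
      _ ≤ 20 * (5 * ∫⁻ t, g t) := mul_le_mul_right hwk _
      _ = 100 * ENNReal.ofReal (∫ t, |f t|) := by rw [hIg]; ring
      _ = ENNReal.ofReal (100 * ∫ t, |f t|) := by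
          rw [← ENNReal.ofReal_ofNat 100, ← ENNReal.ofReal_mul (by norm_num)]
  rw [ENNReal.ofReal_div_of_pos hlam,
    ENNReal.le_div_iff_mul_le (Or.inl (ENNReal.ofReal_pos.2 hlam).ne')
      (Or.inl ENNReal.ofReal_ne_top)]
  exact hmain
end

section
/- Let f ∈ L¹(ℝ) with f ≥ 0, let δ > 0, y > 0, x ∈ ℝ, λ > 0, and let P₁(t,y) = min(y/(π(y²+t²)), y/(π(y²+δ²))). If ∫_ℝ P₁(x − t, y) f(t) dt > λ, then there exists a > δ such that (1/(2a)) ∫_{x−a}^{x+a} f(t) dt > λ. -/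
open MeasureTheory Set Filter

namespace Stmt18Aux

noncomputable def g (y a : ℝ) : ℝ := 2 * a * y / (Real.pi * (y ^ 2 + a ^ 2) ^ 2)

lemma gderiv {y : ℝ} (hy : 0 < y) (a : ℝ) :
    HasDerivAt (fun a => -(y / (Real.pi * (y ^ 2 + a ^ 2)))) (g y a) a := by
  have hd : (0:ℝ) < y ^ 2 + a ^ 2 := by positivity
  have h1 : HasDerivAt (fun a : ℝ => Real.pi * (y ^ 2 + a ^ 2)) (Real.pi * (2 * a)) a := by
    have : HasDerivAt (fun a : ℝ => y ^ 2 + a ^ 2) (2 * a) a := by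
      simpa using ((hasDerivAt_pow 2 a).const_add (y ^ 2))
    exact this.const_mul Real.pi
  have h2 : HasDerivAt (fun a => y / (Real.pi * (y ^ 2 + a ^ 2)))
      (-(y * (Real.pi * (2 * a))) / (Real.pi * (y ^ 2 + a ^ 2)) ^ 2) a := by
    have := (hasDerivAt_const a y).div h1 (by positivity)
    simp only [zero_mul, zero_sub] at this
    exact this
  refine h2.neg.congr_deriv ?_
  have hpi := Real.pi_pos
  unfold g
  field_simp

lemma gtend {y : ℝ} (hy : 0 < y) :
    Tendsto (fun a => -(y / (Real.pi * (y ^ 2 + a ^ 2)))) atTop (nhds 0) := by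
  have h : Tendsto (fun a : ℝ => Real.pi * (y ^ 2 + a ^ 2)) atTop atTop := by
    apply Tendsto.const_mul_atTop Real.pi_pos
    apply tendsto_atTop_add_const_left
    exact tendsto_pow_atTop (by norm_num)
  simpa using (tendsto_const_nhds.div_atTop h).neg

lemma g_nonneg {y : ℝ} (hy : 0 < y) {a : ℝ} (ha : 0 ≤ a) : 0 ≤ g y a := by
  unfold g; positivity

lemma int_g {y : ℝ} (hy : 0 < y) {m : ℝ} (hm : 0 ≤ m) :
    ∫ a in Ioi m, g y a = y / (Real.pi * (y ^ 2 + m ^ 2)) := by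
  have h := integral_Ioi_of_hasDerivAt_of_nonneg' (a := m)
    (fun x _ => gderiv hy x) (fun x hx => g_nonneg hy (hm.trans (le_of_lt hx))) (gtend hy)
  rw [h]; ring

lemma intg_on {y : ℝ} (hy : 0 < y) {m : ℝ} (hm : 0 ≤ m) : IntegrableOn (g y) (Ioi m) := by
  exact integrableOn_Ioi_deriv_of_nonneg' (fun x _ => gderiv hy x)
    (fun x hx => g_nonneg hy (hm.trans (le_of_lt hx))) (gtend hy)

lemma Hderiv {y : ℝ} (hy : 0 < y) (a : ℝ) :
    HasDerivAt (fun a => (2 / Real.pi) * Real.arctan (a / y)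
      - 2 * y * a / (Real.pi * (y ^ 2 + a ^ 2))) (2 * a * g y a) a := by
  have hd : (0:ℝ) < y ^ 2 + a ^ 2 := by positivity
  have hpi := Real.pi_pos
  have h1 : HasDerivAt (fun a : ℝ => (2 / Real.pi) * Real.arctan (a / y))
      ((2 / Real.pi) * ((1 / (1 + (a / y) ^ 2)) * (1 / y))) a := by
    have := (Real.hasDerivAt_arctan (a / y)).comp a ((hasDerivAt_id a).div_const y)
    simpa using this.const_mul (2 / Real.pi)
  have h2 : HasDerivAt (fun a : ℝ => 2 * y * a / (Real.pi * (y ^ 2 + a ^ 2)))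
      ((2 * y * (Real.pi * (y ^ 2 + a ^ 2)) - 2 * y * a * (Real.pi * (2 * a)))
        / (Real.pi * (y ^ 2 + a ^ 2)) ^ 2) a := by
    have hb : HasDerivAt (fun a : ℝ => Real.pi * (y ^ 2 + a ^ 2)) (Real.pi * (2 * a)) a := by
      have : HasDerivAt (fun a : ℝ => y ^ 2 + a ^ 2) (2 * a) a := by
        simpa using ((hasDerivAt_pow 2 a).const_add (y ^ 2))
      exact this.const_mul Real.pi
    have ha : HasDerivAt (fun a : ℝ => 2 * y * a) (2 * y) a := by
      simpa using (hasDerivAt_id a).const_mul (2 * y)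
    exact ha.div hb (by positivity)
  refine (h1.sub h2).congr_deriv ?_
  have h3 : 1 + (a / y) ^ 2 ≠ 0 := by positivity
  unfold g
  field_simp
  ring

lemma Htend {y : ℝ} (hy : 0 < y) :
    Tendsto (fun a => (2 / Real.pi) * Real.arctan (a / y)
      - 2 * y * a / (Real.pi * (y ^ 2 + a ^ 2))) atTop (nhds 1) := by
  have h1 : Tendsto (fun a : ℝ => (2 / Real.pi) * Real.arctan (a / y)) atTop (nhds 1) := by
    have hdiv : Tendsto (fun a : ℝ => a / y) atTop atTop := tendsto_id.atTop_div_const hy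
    have h0 : Tendsto (fun a : ℝ => Real.arctan (a / y)) atTop (nhds (Real.pi / 2)) :=
      (Real.tendsto_arctan_atTop.mono_right nhdsWithin_le_nhds).comp hdiv
    have h2 := h0.const_mul (2 / Real.pi)
    have heq : (2 / Real.pi) * (Real.pi / 2) = 1 := by
      field_simp
    simpa [heq] using h2
  have h2 : Tendsto (fun a : ℝ => 2 * y * a / (Real.pi * (y ^ 2 + a ^ 2))) atTop (nhds 0) := by
    have hev : ∀ᶠ a : ℝ in atTop, (2 * y / Real.pi) / (y ^ 2 / a + a)
        = 2 * y * a / (Real.pi * (y ^ 2 + a ^ 2)) := by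
      filter_upwards [eventually_gt_atTop (0:ℝ)] with a ha
      have h3 : (0:ℝ) < y ^ 2 + a ^ 2 := by positivity
      have hne : y ^ 2 / a + a ≠ 0 := by positivity
      rw [div_eq_div_iff hne (by positivity)]
      field_simp
    have hto : Tendsto (fun a : ℝ => y ^ 2 / a + a) atTop atTop := by
      apply tendsto_atTop_mono' _ _ tendsto_id
      filter_upwards [eventually_gt_atTop (0:ℝ)] with a ha
      have : 0 ≤ y ^ 2 / a := by positivity
      simp only [id]
      linarith
    exact Tendsto.congr' hev (tendsto_const_nhds.div_atTop hto)
  simpa using h1.sub h2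

lemma intH_on {y : ℝ} (hy : 0 < y) : IntegrableOn (fun a => 2 * a * g y a) (Ioi 0) := by
  refine integrableOn_Ioi_deriv_of_nonneg' (fun x _ => Hderiv hy x) ?_ (Htend hy)
  intro x hx
  exact mul_nonneg (by linarith [le_of_lt (mem_Ioi.mp hx)]) (g_nonneg hy (le_of_lt (mem_Ioi.mp hx)))

lemma int_H {y : ℝ} (hy : 0 < y) : ∫ a in Ioi 0, 2 * a * g y a = 1 := by
  have h := integral_Ioi_of_hasDerivAt_of_nonneg' (a := 0) (fun x _ => Hderiv hy x)
    (fun x hx => mul_nonneg (by linarith [le_of_lt (mem_Ioi.mp hx)]) (g_nonneg hy (le_of_lt (mem_Ioi.mp hx)))) (Htend hy)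
  rw [h]
  simp [Real.arctan_zero]

end Stmt18Aux

open Stmt18Aux
theorem stmt18 (f : ℝ → ℝ) (hf : Integrable f) (hf0 : ∀ t, 0 ≤ f t)
    (δ y x lam : ℝ) (hδ : 0 < δ) (hy : 0 < y) (hlam : 0 < lam)
    (P₁ : ℝ → ℝ)
    (hP₁ : ∀ t, P₁ t = min (y / (Real.pi * (y ^ 2 + t ^ 2))) (y / (Real.pi * (y ^ 2 + δ ^ 2))))
    (h : lam < ∫ t, P₁ (x - t) * f t) :
    ∃ a : ℝ, δ < a ∧ lam < (1 / (2 * a)) * ∫ t in (x - a)..(x + a), f t := by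
  by_contra hcon
  push_neg at hcon
  have hpi := Real.pi_pos
  -- Step 1: from the contradiction hypothesis, all centered averages over radius a > δ are ≤ λ
  have key : ∀ a : ℝ, δ < a → ∫ t in Icc (x - a) (x + a), f t ≤ 2 * a * lam := by
    intro a ha
    have h2a : (0:ℝ) < 2 * a := by linarith
    have hle : x - a ≤ x + a := by linarith
    have h1 := hcon a ha
    rw [intervalIntegral.integral_of_le hle, ← integral_Icc_eq_integral_Ioc] at h1
    have h3 := mul_le_mul_of_nonneg_left h1 (le_of_lt h2a)
    rw [← mul_assoc, mul_one_div_cancel (ne_of_gt h2a), one_mul] at h3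
    linarith
  -- Step 2: the kernel representation of P₁ as superposition of box kernels
  have hker : ∀ t : ℝ,
      ∫ a in Ioi δ, (Icc (x - a) (x + a)).indicator f t * g y a = P₁ (x - t) * f t := by
    intro t
    set r := |x - t| with hr
    have hr0 : (0:ℝ) ≤ r := abs_nonneg _
    have hmem : ∀ a : ℝ, ((Icc (x - a) (x + a)).indicator f t) * g y a
        = f t * (Ici r).indicator (g y) a := by
      intro a
      by_cases hc : a ∈ Ici r
      · have habs : |x - t| ≤ a := hc
        rw [abs_le] at habs
        have ht : t ∈ Icc (x - a) (x + a) := ⟨by linarith [habs.2], by linarith [habs.1]⟩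
        rw [indicator_of_mem ht, indicator_of_mem hc]
      · have ht : t ∉ Icc (x - a) (x + a) := by
          intro hmem
          apply hc
          rw [mem_Ici, hr, abs_le]
          exact ⟨by linarith [hmem.2], by linarith [hmem.1]⟩
        rw [indicator_of_notMem ht, indicator_of_notMem hc, zero_mul, mul_zero]
    simp only [hmem]
    rw [integral_const_mul, setIntegral_indicator measurableSet_Ici]
    have hsq : r ^ 2 = (x - t) ^ 2 := by rw [hr, sq_abs]
    rcases le_or_gt r δ with hcase | hcase
    · have hI2 : Ioi δ ∩ Ici r = Ioi δ :=
        inter_eq_left.mpr (fun a ha => hcase.trans (le_of_lt ha))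
      rw [hI2, int_g hy hδ.le, hP₁]
      have h1 : (x - t) ^ 2 ≤ δ ^ 2 := by nlinarith
      rw [min_eq_right (by apply div_le_div_of_nonneg_left hy.le (by positivity) (by nlinarith))]
      ring
    · have hI2 : Ioi δ ∩ Ici r = Ici r :=
        inter_eq_right.mpr (fun a ha => lt_of_lt_of_le hcase ha)
      rw [hI2, integral_Ici_eq_integral_Ioi, int_g hy hr0, hP₁]
      have h1 : δ ^ 2 ≤ (x - t) ^ 2 := by nlinarith
      rw [min_eq_left (by apply div_le_div_of_nonneg_left hy.le (by positivity) (by nlinarith))]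
      rw [hsq]; ring
  -- Step 3: Fubini
  set ν : Measure ℝ := volume.restrict (Ioi δ) with hν
  set F : ℝ → ℝ → ℝ := fun t a => (Icc (x - a) (x + a)).indicator f t * g y a with hF
  have hgcont : Continuous (g y) := by
    apply Continuous.div
    · exact (continuous_const.mul continuous_id).mul continuous_const
    · exact continuous_const.mul ((continuous_const.add (continuous_pow 2)).pow 2)
    · intro a; positivity
  have hint : Integrable (Function.uncurry F) (volume.prod ν) := by
    have hS : MeasurableSet {p : ℝ × ℝ | x - p.2 ≤ p.1 ∧ p.1 ≤ x + p.2} := by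
      apply MeasurableSet.inter
      · exact measurableSet_le (measurable_const.sub measurable_snd) measurable_fst
      · exact measurableSet_le measurable_fst (measurable_const.add measurable_snd)
    have heq : Function.uncurry F
        = ({p : ℝ × ℝ | x - p.2 ≤ p.1 ∧ p.1 ≤ x + p.2}).indicator
            (fun p => f p.1 * g y p.2) := by
      funext p
      by_cases hp : p ∈ {p : ℝ × ℝ | x - p.2 ≤ p.1 ∧ p.1 ≤ x + p.2}
      · rw [indicator_of_mem hp]
        show (Icc (x - p.2) (x + p.2)).indicator f p.1 * g y p.2 = _
        rw [indicator_of_mem (Set.mem_Icc.mpr ⟨hp.1, hp.2⟩)]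
      · rw [indicator_of_notMem hp]
        show (Icc (x - p.2) (x + p.2)).indicator f p.1 * g y p.2 = 0
        rw [indicator_of_notMem (fun hmem => hp ⟨(Set.mem_Icc.mp hmem).1, (Set.mem_Icc.mp hmem).2⟩), zero_mul]
    have hmeas : AEStronglyMeasurable (Function.uncurry F) (volume.prod ν) := by
      rw [heq]
      exact ((hf.aestronglyMeasurable.comp_fst).mul
        ((hgcont.measurable.comp measurable_snd).aestronglyMeasurable)).indicator hS
    have hbd : Integrable (fun p : ℝ × ℝ => f p.1 * |g y p.2|) (volume.prod ν) :=
      hf.mul_prod ((intg_on hy hδ.le).abs)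
    apply hbd.mono hmeas
    filter_upwards with p
    show ‖(Icc (x - p.2) (x + p.2)).indicator f p.1 * g y p.2‖ ≤ ‖f p.1 * |g y p.2|‖
    rw [Real.norm_eq_abs, Real.norm_eq_abs, abs_mul, abs_mul, abs_abs]
    apply mul_le_mul_of_nonneg_right _ (abs_nonneg _)
    rw [abs_of_nonneg (hf0 p.1)]
    by_cases hp : p.1 ∈ Icc (x - p.2) (x + p.2)
    · rw [indicator_of_mem hp, abs_of_nonneg (hf0 p.1)]
    · rw [indicator_of_notMem hp, abs_zero]; exact hf0 p.1
  have hswap : ∫ t, P₁ (x - t) * f t = ∫ a in Ioi δ, ∫ t, F t a := by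
    have h1 : ∫ t, P₁ (x - t) * f t = ∫ t, ∫ a, F t a ∂ν := by
      apply integral_congr_ae
      filter_upwards with t
      exact (hker t).symm
    rw [h1, integral_integral_swap hint]
  -- Step 4: compute/estimate the inner integral and conclude
  have hinner : ∀ a : ℝ, ∫ t, F t a = (∫ t in Icc (x - a) (x + a), f t) * g y a := by
    intro a
    rw [hF]
    rw [integral_mul_const, integral_indicator measurableSet_Icc]
  have hH_int : IntegrableOn (fun a => 2 * a * g y a) (Ioi δ) :=
    (intH_on hy).mono_set (Ioi_subset_Ioi hδ.le)
  have hle1 : ∫ a in Ioi δ, ∫ t, F t a ≤ ∫ a in Ioi δ, lam * (2 * a * g y a) := by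
    apply integral_mono_of_nonneg
    · filter_upwards [self_mem_ae_restrict measurableSet_Ioi] with a ha
      rw [hinner a]
      apply mul_nonneg (setIntegral_nonneg measurableSet_Icc fun t _ => hf0 t)
      exact g_nonneg hy (le_of_lt (hδ.trans ha))
    · exact hH_int.const_mul lam
    · filter_upwards [self_mem_ae_restrict measurableSet_Ioi] with a ha
      rw [hinner a]
      calc (∫ t in Icc (x - a) (x + a), f t) * g y a
          ≤ (2 * a * lam) * g y a :=
            mul_le_mul_of_nonneg_right (key a ha) (g_nonneg hy (le_of_lt (hδ.trans ha)))
        _ = lam * (2 * a * g y a) := by ring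
  have hle2 : ∫ a in Ioi δ, lam * (2 * a * g y a) = lam * ∫ a in Ioi δ, 2 * a * g y a :=
    integral_const_mul lam _
  have hle3 : ∫ a in Ioi δ, 2 * a * g y a ≤ 1 := by
    rw [← int_H hy]
    apply setIntegral_mono_set (intH_on hy)
    · filter_upwards [self_mem_ae_restrict measurableSet_Ioi] with a ha
      exact mul_nonneg (by linarith [le_of_lt (mem_Ioi.mp ha)]) (g_nonneg hy (le_of_lt (mem_Ioi.mp ha)))
    · exact HasSubset.Subset.eventuallyLE (Ioi_subset_Ioi hδ.le)
  have : ∫ t, P₁ (x - t) * f t ≤ lam := by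
    rw [hswap]
    calc ∫ a in Ioi δ, ∫ t, F t a ≤ ∫ a in Ioi δ, lam * (2 * a * g y a) := hle1
      _ = lam * ∫ a in Ioi δ, 2 * a * g y a := hle2
      _ ≤ lam * 1 := mul_le_mul_of_nonneg_left hle3 hlam.le
      _ = lam := mul_one lam
  linarith
end
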